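/- Under the sharp-threshold scaling n(λ) = √λ · e^{αλD} with two-sided bounds (1/√(2πcλ)) e^{−λD − 1/(12cλ)} ≤ q(λ) ≤ e^{−λD}, the system false-alert probability P(λ) = 1 − (1 − q(λ))^{⌊n(λ)⌋} tends to 0 as λ → ∞ if α < 1 and tends to 1 as λ → ∞ if α > 1. -/

import Mathlib

set_option maxHeartbeats 1000000


open Filter

/-- Sharp threshold for the system-level false-alert probability
`P(λ) = 1 − (1 − q(λ))^{⌊n(λ)⌋}`: it tends to `0` if `α < 1` and to `1` if `α > 1`. -/
theorem sharp_threshold_system_probability (c D α : ℝ) (hc : 1 < c)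
    (hD : D = c * Real.log c - c + 1) (hα : 0 < α) (hα1 : α ≠ 1)
    (q : ℝ → ℝ) (hq01 : ∀ lam : ℝ, 1 ≤ lam → q lam ∈ Set.Ioo (0 : ℝ) 1)
    (hq : ∀ lam : ℝ, 1 ≤ lam →
      (1 / Real.sqrt (2 * Real.pi * c * lam)) *
          Real.exp (-lam * D - 1 / (12 * c * lam)) ≤ q lam ∧
        q lam ≤ Real.exp (-lam * D))
    (n : ℝ → ℝ) (hn : ∀ lam : ℝ, n lam = Real.sqrt lam * Real.exp (α * lam * D)) :
    (α < 1 → Tendsto (fun lam => 1 - (1 - q lam) ^ (Nat.floor (n lam))) atTop (nhds 0)) ∧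
    (1 < α → Tendsto (fun lam => 1 - (1 - q lam) ^ (Nat.floor (n lam))) atTop (nhds 1)) := by
  have hc0 : (0:ℝ) < c := lt_trans one_pos hc
  have hD0 : 0 < D := by
    have h1 : Real.log (1/c) < 1/c - 1 :=
      Real.log_lt_sub_one_of_pos (by positivity) (by
        intro h
        have : c = 1 := by field_simp at h; linarith
        linarith)
    rw [Real.log_div one_ne_zero (ne_of_gt hc0), Real.log_one] at h1
    have h2 : 1 - 1/c < Real.log c := by linarith
    have h3 : c * (1 - 1/c) < c * Real.log c := mul_lt_mul_of_pos_left h2 hc0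
    have h4 : c * (1 - 1/c) = c - 1 := by field_simp
    rw [hD]; linarith
  constructor
  · -- α < 1 : tends to 0
    intro hα'
    set k := (1 - α) * D with hk
    have hk0 : 0 < k := mul_pos (by linarith) hD0
    -- λ * exp (-(k λ)) → 0
    have hkl : Tendsto (fun lam : ℝ => k * lam) atTop atTop :=
      Tendsto.const_mul_atTop hk0 tendsto_id
    have comp : Tendsto (fun lam : ℝ => (k*lam) ^ 1 * Real.exp (-(k*lam))) atTop (nhds 0) :=
      (Real.tendsto_pow_mul_exp_neg_atTop_nhds_zero 1).comp hkl
    have h0 : Tendsto (fun lam : ℝ => lam * Real.exp (-(k*lam))) atTop (nhds 0) := by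
      have h2 := comp.const_mul k⁻¹
      rw [mul_zero] at h2
      refine h2.congr fun lam => ?_
      field_simp
    refine squeeze_zero' ?_ ?_ h0
    · filter_upwards [eventually_ge_atTop (1:ℝ)] with lam hlam
      obtain ⟨hq0, hq1⟩ := hq01 lam hlam
      have : (1 - q lam) ^ (Nat.floor (n lam)) ≤ 1 :=
        pow_le_one₀ (by linarith) (by linarith)
      linarith
    · filter_upwards [eventually_ge_atTop (1:ℝ)] with lam hlam
      obtain ⟨hq0, hq1⟩ := hq01 lam hlam
      have hber : 1 - (Nat.floor (n lam) : ℝ) * q lam ≤ (1 - q lam) ^ (Nat.floor (n lam)) := by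
        have := one_add_mul_le_pow (a := -q lam) (by linarith) (Nat.floor (n lam))
        calc 1 - (Nat.floor (n lam) : ℝ) * q lam
            = 1 + (Nat.floor (n lam) : ℝ) * (-q lam) := by ring
          _ ≤ (1 + -q lam) ^ (Nat.floor (n lam)) := this
          _ = (1 - q lam) ^ (Nat.floor (n lam)) := by ring_nf
      have hn0 : 0 ≤ n lam := by rw [hn]; positivity
      have hfloorle : (Nat.floor (n lam) : ℝ) ≤ n lam := Nat.floor_le hn0
      have hnq : (Nat.floor (n lam) : ℝ) * q lam ≤ lam * Real.exp (-(k*lam)) := by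
        calc (Nat.floor (n lam) : ℝ) * q lam
            ≤ n lam * Real.exp (-lam * D) :=
              mul_le_mul hfloorle ((hq lam hlam).2) (le_of_lt hq0) hn0
          _ = Real.sqrt lam * Real.exp (-(k*lam)) := by
              rw [hn, mul_assoc, ← Real.exp_add]
              congr 2
              rw [hk]; ring
          _ ≤ lam * Real.exp (-(k*lam)) := by
              have hss : Real.sqrt lam ≤ lam := by
                nlinarith [Real.sq_sqrt (by linarith : (0:ℝ) ≤ lam), Real.sqrt_nonneg lam]
              gcongr
      linarith
  · -- α > 1 : tends to 1
    intro hα'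
    set k := (α - 1) * D with hk
    have hk0 : 0 < k := mul_pos (by linarith) hD0
    set B := Real.sqrt (2 * Real.pi * c) with hB
    have hBpos : 0 < B := Real.sqrt_pos.2 (by positivity)
    set C := Real.exp (-(1/(12*c))) / B with hC
    have hCpos : 0 < C := by positivity
    -- ⌊n⌋ q → ∞
    have hmq : Tendsto (fun lam : ℝ => (Nat.floor (n lam) : ℝ) * q lam) atTop atTop := by
      have hg : Tendsto (fun lam : ℝ => C * Real.exp (k * lam) - 1) atTop atTop := by
        have h1 : Tendsto (fun lam : ℝ => C * Real.exp (k * lam)) atTop atTop :=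
          Tendsto.const_mul_atTop hCpos
            (Real.tendsto_exp_atTop.comp (Tendsto.const_mul_atTop hk0 tendsto_id))
        simpa [sub_eq_add_neg] using tendsto_atTop_add_const_right atTop (-1 : ℝ) h1
      refine tendsto_atTop_mono' _ ?_ hg
      filter_upwards [eventually_ge_atTop (1:ℝ)] with lam hlam
      obtain ⟨hq0, hq1⟩ := hq01 lam hlam
      have hlam0 : (0:ℝ) < lam := by linarith
      have hs : Real.sqrt (2*Real.pi*c*lam) = B * Real.sqrt lam :=
        Real.sqrt_mul (by positivity) lam
      have hsl : 0 < Real.sqrt lam := Real.sqrt_pos.2 hlam0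
      have hn0 : 0 ≤ n lam := by rw [hn]; positivity
      have key : C * Real.exp (k * lam) ≤ n lam * q lam := by
        have hexp : Real.exp (α*lam*D - lam*D - 1/(12*c*lam)) =
            Real.exp (α*lam*D) * Real.exp (-lam*D - 1/(12*c*lam)) := by
          rw [← Real.exp_add]; ring_nf
        calc C * Real.exp (k * lam)
            ≤ (1/B) * Real.exp (α*lam*D - lam*D - 1/(12*c*lam)) := by
              have harg : -(1/(12*c)) + k * lam ≤ α*lam*D - lam*D - 1/(12*c*lam) := by
                have h12 : 1/(12*c*lam) ≤ 1/(12*c) := by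
                  apply one_div_le_one_div_of_le (by positivity)
                  nlinarith
                have hkl : k * lam = α*lam*D - lam*D := by rw [hk]; ring
                linarith
              have heq : C * Real.exp (k*lam) = (1/B) * Real.exp (-(1/(12*c)) + k*lam) := by
                rw [hC, Real.exp_add]
                field_simp
              rw [heq]
              exact mul_le_mul_of_nonneg_left (Real.exp_le_exp.2 harg) (by positivity)
          _ = n lam * ((1/Real.sqrt (2*Real.pi*c*lam)) * Real.exp (-lam*D - 1/(12*c*lam))) := by
              rw [hn, hs, hexp]
              field_simp
          _ ≤ n lam * q lam := by
              have := (hq lam hlam).1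
              gcongr
      have hfloor : n lam - 1 ≤ (Nat.floor (n lam) : ℝ) := by
        rcases le_or_gt 1 (n lam) with h | h
        · linarith [Nat.sub_one_lt_floor (n lam)]
        · have : (0:ℝ) ≤ (Nat.floor (n lam) : ℝ) := Nat.cast_nonneg _
          linarith
      calc C * Real.exp (k * lam) - 1
          ≤ n lam * q lam - 1 := by linarith
        _ ≤ n lam * q lam - q lam := by linarith
        _ = (n lam - 1) * q lam := by ring
        _ ≤ (Nat.floor (n lam) : ℝ) * q lam := by
            apply mul_le_mul_of_nonneg_right hfloor (le_of_lt hq0)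
    -- (1-q)^⌊n⌋ → 0
    have hpow : Tendsto (fun lam => (1 - q lam) ^ (Nat.floor (n lam))) atTop (nhds 0) := by
      have hexp0 : Tendsto (fun lam : ℝ =>
          Real.exp (-((Nat.floor (n lam) : ℝ) * q lam))) atTop (nhds 0) :=
        Real.tendsto_exp_atBot.comp (tendsto_neg_atBot_iff.2 hmq)
      refine squeeze_zero' ?_ ?_ hexp0
      · filter_upwards [eventually_ge_atTop (1:ℝ)] with lam hlam
        obtain ⟨hq0, hq1⟩ := hq01 lam hlam
        exact pow_nonneg (by linarith) _
      · filter_upwards [eventually_ge_atTop (1:ℝ)] with lam hlam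
        obtain ⟨hq0, hq1⟩ := hq01 lam hlam
        calc (1 - q lam) ^ (Nat.floor (n lam))
            ≤ (Real.exp (-q lam)) ^ (Nat.floor (n lam)) := by
              apply pow_le_pow_left₀ (by linarith)
              linarith [Real.add_one_le_exp (-q lam)]
          _ = Real.exp (-((Nat.floor (n lam) : ℝ) * q lam)) := by
              rw [← Real.exp_nat_mul]; congr 1; ring
    have := tendsto_const_nhds (x := (1:ℝ)) (f := atTop (α := ℝ)) |>.sub hpow
    simpa using this
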